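/- For a bivariate function f^c ∈ L²(P) with P = P_X × P_Y a product of probability measures and ∬ f^c dP = 0, the independent part f_ind^c = f_X^c + f_Y^c is the orthogonal projection of f^c onto the closed subspace V = {g(x) + h(y) : g ∈ L²(P_X), h ∈ L²(P_Y), ∫g dP_X = 0, ∫h dP_Y = 0} of L²(P); equivalently, for every element v ∈ V, ‖f^c − f_ind^c‖_{L²(P)} ≤ ‖f^c − v‖_{L²(P)}. -/

import Mathlib

open MeasureTheory
open scoped ENNReal

private lemma mulInt {α : Type*} [MeasurableSpace α] {μ : Measure α} {u v : α → ℝ}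
    (hu : MemLp u 2 μ) (hv : MemLp v 2 μ) :
    Integrable (fun x => u x * v x) μ := by
  have h : (1 : ℝ≥0∞) / 1 = 1 / 2 + 1 / 2 := by
    simp [ENNReal.inv_two_add_inv_two]
  have := (hv.smul hu : MemLp (u • v) 1 μ)
  have hi := memLp_one_iff_integrable.mp this
  simpa [Pi.smul_apply, smul_eq_mul, Pi.mul_def] using hi

private lemma sqIntLe {α : Type*} [MeasurableSpace α] {μ : Measure α}
    [IsProbabilityMeasure μ] {u : α → ℝ}
    (h1 : Integrable u μ) (h2 : Integrable (fun x => u x ^ 2) μ) :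
    (∫ x, u x ∂μ) ^ 2 ≤ ∫ x, u x ^ 2 ∂μ := by
  set c := ∫ x, u x ∂μ with hc
  have h0 : 0 ≤ ∫ x, (u x - c) ^ 2 ∂μ := integral_nonneg fun _ => sq_nonneg _
  have hexp : ∫ x, (u x - c) ^ 2 ∂μ = (∫ x, u x ^ 2 ∂μ) - c ^ 2 := by
    have hfe : (fun x => (u x - c) ^ 2) = fun x => u x ^ 2 - 2 * c * u x + c ^ 2 :=
      funext fun x => by ring
    have ia : Integrable (fun x => u x ^ 2 - 2 * c * u x) μ := h2.sub (h1.const_mul (2 * c))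
    rw [hfe, integral_add ia (integrable_const _),
      integral_sub h2 (h1.const_mul (2 * c)), integral_const_mul, integral_const]
    simp [← hc]
    ring
  linarith

/-- for product probability measures, the independent part
`f_ind^c = f_X^c + f_Y^c` is the best `L²(P)`-approximation of `f^c` among all elements
of the subspace `V` of sums `g(x) + h(y)` of zero-integral square-integrable univariate
functions (i.e., it is the orthogonal projection of `f^c` onto `V`). -/
theorem independent_part_is_projection
    {α β : Type*} [MeasurableSpace α] [MeasurableSpace β]
    (μ : Measure α) (ν : Measure β) [IsProbabilityMeasure μ] [IsProbabilityMeasure ν]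
    (f : α × β → ℝ) (hf : MemLp f 2 (μ.prod ν))
    (hzero : ∫ z, f z ∂(μ.prod ν) = 0) :
    ∀ g : α → ℝ, ∀ h : β → ℝ, MemLp g 2 μ → MemLp h 2 ν →
      (∫ x, g x ∂μ = 0) → (∫ y, h y ∂ν = 0) →
      (∫ z, (f z - ((∫ y, f (z.1, y) ∂ν) + (∫ x, f (x, z.2) ∂μ))) ^ 2 ∂(μ.prod ν)) ≤
        ∫ z, (f z - (g z.1 + h z.2)) ^ 2 ∂(μ.prod ν) := by
  intro g h hg hh hgz hhz
  have hfm : AEStronglyMeasurable f (μ.prod ν) := hf.aestronglyMeasurable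
  have hfi : Integrable f (μ.prod ν) := hf.integrable one_le_two
  have hf2 : Integrable (fun z => f z ^ 2) (μ.prod ν) :=
    (memLp_two_iff_integrable_sq hfm).mp hf
  set fX : α → ℝ := fun x => ∫ y, f (x, y) ∂ν with hfXdef
  set fY : β → ℝ := fun y => ∫ x, f (x, y) ∂μ with hfYdef
  -- measurability of marginals
  have hfXm : AEStronglyMeasurable fX μ := hfm.integral_prod_right'
  have hfYm : AEStronglyMeasurable fY ν := by
    have := (hfm.prod_swap : AEStronglyMeasurable (fun z : β × α => f z.swap) (ν.prod μ))
    exact this.integral_prod_right'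
  -- marginals are in L²
  have hfX2 : MemLp fX 2 μ := by
    refine (memLp_two_iff_integrable_sq hfXm).mpr ?_
    refine Integrable.mono' hf2.integral_prod_left ?_ ?_
    · simpa [pow_two, Pi.mul_def] using hfXm.mul hfXm
    · filter_upwards [hfi.prod_right_ae, hf2.prod_right_ae] with x h1 h2
      have := sqIntLe h1 h2
      simpa [Real.norm_eq_abs, abs_of_nonneg (sq_nonneg (fX x))] using this
  have hfY2 : MemLp fY 2 ν := by
    refine (memLp_two_iff_integrable_sq hfYm).mpr ?_
    refine Integrable.mono' hf2.integral_prod_right ?_ ?_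
    · simpa [pow_two, Pi.mul_def] using hfYm.mul hfYm
    · filter_upwards [hfi.prod_left_ae, hf2.prod_left_ae] with y h1 h2
      have := sqIntLe h1 h2
      simpa [Real.norm_eq_abs, abs_of_nonneg (sq_nonneg (fY y))] using this
  -- zero means of marginals
  have hfX0 : ∫ x, fX x ∂μ = 0 := (integral_prod f hfi).symm.trans hzero
  have hfY0 : ∫ y, fY y ∂ν = 0 := (integral_prod_symm f hfi).symm.trans hzero
  -- measure-preserving projections
  have mpf : MeasurePreserving (Prod.fst : α × β → α) (μ.prod ν) μ :=
    ⟨measurable_fst, by simp⟩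
  have mps : MeasurePreserving (Prod.snd : α × β → β) (μ.prod ν) ν :=
    ⟨measurable_snd, by simp⟩
  have compfst : ∀ {u : α → ℝ}, MemLp u 2 μ →
      MemLp (fun z : α × β => u z.1) 2 (μ.prod ν) :=
    fun hu => hu.comp_measurePreserving mpf
  have compsnd : ∀ {u : β → ℝ}, MemLp u 2 ν →
      MemLp (fun z : α × β => u z.2) 2 (μ.prod ν) :=
    fun hu => hu.comp_measurePreserving mps
  -- the "vertical" and "horizontal" differences
  set G : α → ℝ := fun x => fX x - g x with hGdef
  set H : β → ℝ := fun y => fY y - h y with hHdef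
  have hG2 : MemLp G 2 μ := hfX2.sub hg
  have hH2 : MemLp H 2 ν := hfY2.sub hh
  have hG0 : ∫ x, G x ∂μ = 0 := by
    rw [hGdef]
    rw [integral_sub (hfX2.integrable one_le_two) (hg.integrable one_le_two), hfX0, hgz]
    ring
  have hH0 : ∫ y, H y ∂ν = 0 := by
    rw [hHdef]
    rw [integral_sub (hfY2.integrable one_le_two) (hh.integrable one_le_two), hfY0, hhz]
    ring
  set A : α × β → ℝ := fun z => f z - (fX z.1 + fY z.2) with hAdef
  set B : α × β → ℝ := fun z => G z.1 + H z.2 with hBdef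
  have hA2 : MemLp A 2 (μ.prod ν) := hf.sub ((compfst hfX2).add (compsnd hfY2))
  have hB2 : MemLp B 2 (μ.prod ν) := (compfst hG2).add (compsnd hH2)
  -- integrabilities of products
  have i1 : Integrable (fun z : α × β => f z * G z.1) (μ.prod ν) :=
    mulInt hf (compfst hG2)
  have i2 : Integrable (fun z : α × β => fX z.1 * G z.1) (μ.prod ν) := by
    have hw : Integrable (fun x => fX x * G x) μ := mulInt hfX2 hG2
    have := ((memLp_one_iff_integrable.mpr hw).comp_measurePreserving mpf).integrable le_rfl
    exact this
  have i3 : Integrable (fun z : α × β => fY z.2 * G z.1) (μ.prod ν) := by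
    have := (hG2.integrable one_le_two).mul_prod (hfY2.integrable one_le_two)
    exact this.congr (Filter.Eventually.of_forall fun z => mul_comm _ _)
  have j1 : Integrable (fun z : α × β => f z * H z.2) (μ.prod ν) :=
    mulInt hf (compsnd hH2)
  have j2 : Integrable (fun z : α × β => fY z.2 * H z.2) (μ.prod ν) := by
    have hw : Integrable (fun y => fY y * H y) ν := mulInt hfY2 hH2
    have := ((memLp_one_iff_integrable.mpr hw).comp_measurePreserving mps).integrable le_rfl
    exact this
  have j3 : Integrable (fun z : α × β => fX z.1 * H z.2) (μ.prod ν) :=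
    (hfX2.integrable one_le_two).mul_prod (hH2.integrable one_le_two)
  -- values of individual integrals
  have v1 : ∫ z, f z * G z.1 ∂(μ.prod ν) = ∫ x, fX x * G x ∂μ := by
    rw [integral_prod _ i1]
    simp only [integral_mul_const]
    rfl
  have v2 : ∫ z, fX z.1 * G z.1 ∂(μ.prod ν) = ∫ x, fX x * G x ∂μ := by
    rw [integral_prod _ i2]
    simp
  have v3 : ∫ z, fY z.2 * G z.1 ∂(μ.prod ν) = 0 := by
    have : ∫ z, fY z.2 * G z.1 ∂(μ.prod ν) = ∫ z, G z.1 * fY z.2 ∂(μ.prod ν) := by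
      congr 1; funext z; ring
    rw [this, integral_prod_mul G fY, hG0, hfY0]
    ring
  have w1 : ∫ z, f z * H z.2 ∂(μ.prod ν) = ∫ y, fY y * H y ∂ν := by
    rw [integral_prod_symm _ j1]
    simp only [integral_mul_const]
    rfl
  have w2 : ∫ z, fY z.2 * H z.2 ∂(μ.prod ν) = ∫ y, fY y * H y ∂ν := by
    rw [integral_prod_symm _ j2]
    simp
  have w3 : ∫ z, fX z.1 * H z.2 ∂(μ.prod ν) = 0 := by
    rw [integral_prod_mul fX H, hfX0]
    ring
  -- orthogonality
  have eAG : ∫ z, A z * G z.1 ∂(μ.prod ν) = 0 := by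
    have hfe : (fun z : α × β => A z * G z.1)
        = fun z => f z * G z.1 - fX z.1 * G z.1 - fY z.2 * G z.1 :=
      funext fun z => by simp only [hAdef]; ring
    have i12 : Integrable (fun z : α × β => f z * G z.1 - fX z.1 * G z.1) (μ.prod ν) := i1.sub i2
    rw [hfe, integral_sub i12 i3, integral_sub i1 i2, v1, v2, v3]
    ring
  have eAH : ∫ z, A z * H z.2 ∂(μ.prod ν) = 0 := by
    have hfe : (fun z : α × β => A z * H z.2)
        = fun z => f z * H z.2 - fY z.2 * H z.2 - fX z.1 * H z.2 :=
      funext fun z => by simp only [hAdef]; ring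
    have j12 : Integrable (fun z : α × β => f z * H z.2 - fY z.2 * H z.2) (μ.prod ν) := j1.sub j2
    rw [hfe, integral_sub j12 j3, integral_sub j1 j2, w1, w2, w3]
    ring
  have iAG : Integrable (fun z : α × β => A z * G z.1) (μ.prod ν) :=
    mulInt hA2 (compfst hG2)
  have iAH : Integrable (fun z : α × β => A z * H z.2) (μ.prod ν) :=
    mulInt hA2 (compsnd hH2)
  have eAB : ∫ z, A z * B z ∂(μ.prod ν) = 0 := by
    have hfe : (fun z : α × β => A z * B z)
        = fun z => A z * G z.1 + A z * H z.2 :=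
      funext fun z => by simp only [hBdef]; ring
    rw [hfe, integral_add iAG iAH, eAG, eAH]
    ring
  -- square integrabilities
  have intA2 : Integrable (fun z => A z ^ 2) (μ.prod ν) :=
    (memLp_two_iff_integrable_sq hA2.aestronglyMeasurable).mp hA2
  have intB2 : Integrable (fun z => B z ^ 2) (μ.prod ν) :=
    (memLp_two_iff_integrable_sq hB2.aestronglyMeasurable).mp hB2
  have intAB : Integrable (fun z => A z * B z) (μ.prod ν) := mulInt hA2 hB2
  -- final computation
  have hsum : (fun z : α × β => (f z - (g z.1 + h z.2)) ^ 2)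
      = fun z => A z ^ 2 + (2 * (A z * B z) + B z ^ 2) :=
    funext fun z => by simp only [hAdef, hBdef, hGdef, hHdef]; ring
  have hLHS : (fun z : α × β =>
      (f z - ((∫ y, f (z.1, y) ∂ν) + (∫ x, f (x, z.2) ∂μ))) ^ 2) = fun z => A z ^ 2 :=
    funext fun z => rfl
  have cBB : Integrable (fun z : α × β => 2 * (A z * B z) + B z ^ 2) (μ.prod ν) :=
    (intAB.const_mul 2).add intB2
  rw [hLHS, hsum, integral_add intA2 cBB,
    integral_add (intAB.const_mul 2) intB2, integral_const_mul, eAB]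
  have hB2nn : 0 ≤ ∫ z, B z ^ 2 ∂(μ.prod ν) := integral_nonneg fun _ => sq_nonneg _
  linarith
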